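/- Let n ≥ 1, p ≥ 2 and let M be the n×n matrix of the chain with diagonal (-1, -2, ..., -2, -(p+1)) and off-diagonal entries M_{i,i+1} = M_{i+1,i} = -1. Then the first row of M⁻¹ has j-th entry (-1)^j ((n-j)p + 1)/p, and the last row has j-th entry (-1)^{n-j+1}/p. -/

import Mathlib

def chainInv (n p : ℕ) : Matrix (Fin n) (Fin n) ℚ :=
  Matrix.of fun i j =>
    (-1) ^ ((i : ℕ) + (j : ℕ) + 1) *
      (((n : ℚ) - 1 - (max (i : ℕ) (j : ℕ) : ℕ)) * p + 1) / p

lemma chainInv_apply (n p : ℕ) (i j : Fin n) :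
    chainInv n p i j =
      (-1) ^ ((i : ℕ) + (j : ℕ) + 1) *
        (((n : ℚ) - 1 - (max (i : ℕ) (j : ℕ) : ℕ)) * p + 1) / p := rfl

lemma tri_sum {n : ℕ} (M : Matrix (Fin n) (Fin n) ℚ)
    (hzero : ∀ i j : Fin n, (i : ℕ) ≠ (j : ℕ) → (i : ℕ) + 1 ≠ (j : ℕ) →
      (j : ℕ) + 1 ≠ (i : ℕ) → M i j = 0)
    (i : Fin n) (v : Fin n → ℚ) (S : Finset (Fin n))
    (hS : ∀ k : Fin n, ((k : ℕ) + 1 = (i : ℕ) ∨ (k : ℕ) = (i : ℕ) ∨ (i : ℕ) + 1 = (k : ℕ)) → k ∈ S) :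
    ∑ k, M i k * v k = ∑ k ∈ S, M i k * v k := by
  refine (Finset.sum_subset (Finset.subset_univ S) ?_).symm
  intro x _ hx
  have hz : M i x = 0 := by
    refine hzero i x (fun h => hx (hS x ?_)) (fun h => hx (hS x ?_)) (fun h => hx (hS x ?_)) <;> omega
  rw [hz, zero_mul]

theorem stmt8 (n p : ℕ) (hn : 1 ≤ n) (hp : 2 ≤ p) (M : Matrix (Fin n) (Fin n) ℚ)
    (hfirst : M ⟨0, by omega⟩ ⟨0, by omega⟩ = -1)
    (hdiag : ∀ i : Fin n, 1 ≤ (i : ℕ) → (i : ℕ) ≤ n - 2 → M i i = -2)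
    (hlast : M ⟨n - 1, by omega⟩ ⟨n - 1, by omega⟩ = -((p : ℚ) + 1))
    (hoff : ∀ i j : Fin n, (i : ℕ) + 1 = (j : ℕ) → M i j = -1 ∧ M j i = -1)
    (hzero : ∀ i j : Fin n, (i : ℕ) ≠ (j : ℕ) → (i : ℕ) + 1 ≠ (j : ℕ) →
      (j : ℕ) + 1 ≠ (i : ℕ) → M i j = 0) :
    ∀ j : Fin n,
      M⁻¹ ⟨0, by omega⟩ j =
        (-1) ^ ((j : ℕ) + 1) * (((n : ℚ) - 1 - (j : ℕ)) * p + 1) / p ∧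
      M⁻¹ ⟨n - 1, by omega⟩ j = (-1) ^ (n - (j : ℕ)) / p := by
  have hpQ : (2 : ℚ) ≤ (p : ℚ) := by exact_mod_cast hp
  have hp0 : (p : ℚ) ≠ 0 := by linarith
  have hn2 : 2 ≤ n := by
    by_contra h
    have h1 : n = 1 := by omega
    subst h1
    have hcontr : (-1 : ℚ) = -((p : ℚ) + 1) := hfirst.symm.trans hlast
    linarith
  have hMN : M * chainInv n p = 1 := by
    ext i j
    rw [Matrix.mul_apply, Matrix.one_apply]
    rcases i with ⟨iv, hiv⟩
    rcases j with ⟨jv, hjv⟩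
    simp only [Fin.mk.injEq]
    rcases Nat.eq_zero_or_pos iv with hi0 | hi1
    · -- first row
      subst hi0
      rw [tri_sum M hzero _ _ ({⟨0, hiv⟩, ⟨1, by omega⟩} : Finset (Fin n))
          (by intro k hk
              have hk' : (k : ℕ) + 1 = 0 ∨ (k : ℕ) = 0 ∨ 0 + 1 = (k : ℕ) := hk
              simp only [Finset.mem_insert, Finset.mem_singleton, Fin.ext_iff, Fin.val_mk]
              omega)]
      rw [Finset.sum_pair (by simp only [ne_eq, Fin.ext_iff, Fin.val_mk]; omega)]
      have h01 : M ⟨0, hiv⟩ ⟨1, by omega⟩ = -1 := (hoff ⟨0, hiv⟩ ⟨1, by omega⟩ rfl).1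
      rw [hfirst, h01, chainInv_apply, chainInv_apply]
      simp only [Fin.val_mk]
      rcases Nat.eq_zero_or_pos jv with hj0 | hj1
      · subst hj0
        rw [if_pos rfl]
        have h1 : max 0 0 = 0 := by omega
        have h2 : max 1 0 = 1 := by omega
        rw [h1, h2]
        push_cast
        field_simp
        ring
      · rw [if_neg (by omega)]
        have h1 : max 0 jv = jv := by omega
        have h2 : max 1 jv = jv := by omega
        rw [h1, h2, show 0 + jv + 1 = jv + 1 from by omega,
          show 1 + jv + 1 = jv + 1 + 1 from by omega, pow_succ]
        field_simp
        ring
    · rcases Nat.lt_or_ge iv (n - 1) with him | hilast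
      · -- middle row: 1 ≤ iv ≤ n-2
        rw [tri_sum M hzero _ _
            ({⟨iv - 1, by omega⟩, ⟨iv, hiv⟩, ⟨iv + 1, by omega⟩} : Finset (Fin n))
            (by intro k hk
                have hk' : (k : ℕ) + 1 = iv ∨ (k : ℕ) = iv ∨ iv + 1 = (k : ℕ) := hk
                simp only [Finset.mem_insert, Finset.mem_singleton, Fin.ext_iff, Fin.val_mk]
                omega)]
        rw [Finset.sum_insert (by
              simp only [Finset.mem_insert, Finset.mem_singleton, ne_eq, Fin.ext_iff, Fin.val_mk]
              omega),
            Finset.sum_pair (by simp only [ne_eq, Fin.ext_iff, Fin.val_mk]; omega)]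
        have hMa : M ⟨iv, hiv⟩ ⟨iv - 1, by omega⟩ = -1 :=
          (hoff ⟨iv - 1, by omega⟩ ⟨iv, hiv⟩ (show iv - 1 + 1 = iv by omega)).2
        have hMb : M ⟨iv, hiv⟩ ⟨iv, hiv⟩ = -2 := hdiag ⟨iv, hiv⟩ (show 1 ≤ iv by omega) (show iv ≤ n - 2 by omega)
        have hMc : M ⟨iv, hiv⟩ ⟨iv + 1, by omega⟩ = -1 :=
          (hoff ⟨iv, hiv⟩ ⟨iv + 1, by omega⟩ rfl).1
        rw [hMa, hMb, hMc, chainInv_apply, chainInv_apply, chainInv_apply]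
        simp only [Fin.val_mk]
        rcases lt_trichotomy jv iv with hlt | heq | hgt
        · rw [if_neg (by omega)]
          have h1 : max (iv - 1) jv = iv - 1 := by omega
          have h2 : max iv jv = iv := by omega
          have h3 : max (iv + 1) jv = iv + 1 := by omega
          rw [h1, h2, h3, show iv - 1 + jv + 1 = iv + jv from by omega,
            show iv + 1 + jv + 1 = iv + jv + 1 + 1 from by omega]
          simp only [pow_succ]
          rw [Nat.cast_sub (by omega : 1 ≤ iv)]
          push_cast
          field_simp
          ring
        · subst heq
          rw [if_pos rfl]
          have h1 : max (jv - 1) jv = jv := by omega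
          have h2 : max jv jv = jv := by omega
          have h3 : max (jv + 1) jv = jv + 1 := by omega
          rw [h1, h2, h3, show jv - 1 + jv + 1 = jv + jv from by omega,
            show jv + 1 + jv + 1 = jv + jv + 1 + 1 from by omega]
          simp only [pow_succ]
          have hs : (-1 : ℚ) ^ (jv + jv) = 1 := by
            rw [show jv + jv = 2 * jv from by omega, pow_mul]; norm_num
          rw [hs]
          push_cast
          field_simp
          ring
        · rw [if_neg (by omega)]
          have h1 : max (iv - 1) jv = jv := by omega
          have h2 : max iv jv = jv := by omega
          have h3 : max (iv + 1) jv = jv := by omega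
          rw [h1, h2, h3, show iv - 1 + jv + 1 = iv + jv from by omega,
            show iv + 1 + jv + 1 = iv + jv + 1 + 1 from by omega]
          simp only [pow_succ]
          field_simp
          ring
      · -- last row
        have hieq : iv = n - 1 := by omega
        subst hieq
        rw [tri_sum M hzero _ _
            ({⟨n - 2, by omega⟩, ⟨n - 1, by omega⟩} : Finset (Fin n))
            (by intro k hk
                have hk' : (k : ℕ) + 1 = n - 1 ∨ (k : ℕ) = n - 1 ∨ n - 1 + 1 = (k : ℕ) := hk
                simp only [Finset.mem_insert, Finset.mem_singleton, Fin.ext_iff, Fin.val_mk]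
                omega)]
        rw [Finset.sum_pair (by simp only [ne_eq, Fin.ext_iff, Fin.val_mk]; omega)]
        have hMa : M ⟨n - 1, hiv⟩ ⟨n - 2, by omega⟩ = -1 :=
          (hoff ⟨n - 2, by omega⟩ ⟨n - 1, hiv⟩ (show n - 2 + 1 = n - 1 by omega)).2
        have hMb : M ⟨n - 1, hiv⟩ ⟨n - 1, hiv⟩ = -((p : ℚ) + 1) := hlast
        rw [hMa, hMb, chainInv_apply, chainInv_apply]
        simp only [Fin.val_mk]
        rcases Nat.lt_or_ge jv (n - 1) with hjlt | hjge
        · rw [if_neg (by omega)]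
          have h1 : max (n - 2) jv = n - 2 := by omega
          have h2 : max (n - 1) jv = n - 1 := by omega
          rw [h1, h2, show n - 1 + jv + 1 = n - 2 + jv + 1 + 1 from by omega]
          simp only [pow_succ]
          rw [Nat.cast_sub (by omega : 2 ≤ n), Nat.cast_sub (by omega : 1 ≤ n)]
          push_cast
          field_simp
          ring
        · have hjeq : jv = n - 1 := by omega
          subst hjeq
          rw [if_pos rfl]
          have h1 : max (n - 2) (n - 1) = n - 1 := by omega
          have h2 : max (n - 1) (n - 1) = n - 1 := by omega
          rw [h1, h2, show n - 2 + (n - 1) + 1 = 2 * (n - 1) from by omega,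
            show n - 1 + (n - 1) + 1 = 2 * (n - 1) + 1 from by omega, pow_succ, pow_mul]
          norm_num
          rw [Nat.cast_sub (by omega : 1 ≤ n)]
          push_cast
          field_simp
          ring
  have hInv : M⁻¹ = chainInv n p := Matrix.inv_eq_right_inv hMN
  intro j
  rcases j with ⟨jv, hjv⟩
  constructor
  · rw [hInv, chainInv_apply]
    simp only [Fin.val_mk]
    rw [show max 0 jv = jv from by omega, show 0 + jv + 1 = jv + 1 from by omega]
  · rw [hInv, chainInv_apply]
    simp only [Fin.val_mk]
    rw [show max (n - 1) jv = n - 1 from by omega, Nat.cast_sub (by omega : 1 ≤ n),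
      show n - 1 + jv + 1 = n - jv + 2 * jv from by omega, pow_add, pow_mul]
    push_cast
    ring
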